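/- Define a map from {σ ∈ S_n : c(σ) = r} to the set H_n of n-cycles by: list the maximal elements j_1 < j_2 < ... < j_r of the cycles of σ, and if i_k = σ^{-1}(j_k), replace the transitions i_k → j_k by i_k → j_{k+1} (indices mod r). Then this map is well defined into H_n, and each n-cycle τ ∈ H_n has at most C(n, r) preimages. -/

import Mathlib

open scoped Classical

/-- The number of cycles of a permutation, counting fixed points as cycles. -/
noncomputable def cycleCount {n : ℕ} (σ : Equiv.Perm (Fin n)) : ℕ :=
  σ.cycleType.card + (Finset.univ.filter fun i => σ i = i).card

/-- The set of maximal elements of the cycles of `σ`. -/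
noncomputable def maxCycleElems {n : ℕ} (σ : Equiv.Perm (Fin n)) : Finset (Fin n) :=
  Finset.univ.filter fun j => ∀ k, σ.SameCycle j k → k ≤ j

/-- The successor of `j` in a finite set `J`, in cyclic increasing order:
the least element of `J` larger than `j`, wrapping around to the least
element of `J`. -/
noncomputable def nextIn {n : ℕ} (J : Finset (Fin n)) (j : Fin n) : Fin n :=
  ((J.filter fun k => j < k).min).getD ((J.min).getD j)

/-- The patching map of Section 2.4: listing the maximal elements
`j₁ < j₂ < ⋯ < j_r` of the cycles of `σ` and setting `i_k = σ⁻¹ j_k`, the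
transitions `i_k → j_k` are replaced by `i_k → j_{k+1}` (indices mod `r`). -/
noncomputable def patch {n : ℕ} (σ : Equiv.Perm (Fin n)) : Fin n → Fin n :=
  fun x => if σ x ∈ maxCycleElems σ then nextIn (maxCycleElems σ) (σ x) else σ x

/-- The predecessor of `j` in a finite set `J`, in cyclic increasing order. -/
noncomputable def prevIn {n : ℕ} (J : Finset (Fin n)) (j : Fin n) : Fin n :=
  ((J.filter fun k => k < j).max).getD ((J.max).getD j)

section Helpers

variable {n : ℕ}

lemma nextIn_eq_min' {J : Finset (Fin n)} {j : Fin n}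
    (h : (J.filter fun k => j < k).Nonempty) :
    nextIn J j = (J.filter fun k => j < k).min' h := by
  rw [nextIn, ← Finset.coe_min' h]; rfl

lemma nextIn_eq_min {J : Finset (Fin n)} {j : Fin n}
    (h : ¬(J.filter fun k => j < k).Nonempty) (hJ : J.Nonempty) :
    nextIn J j = J.min' hJ := by
  rw [Finset.not_nonempty_iff_eq_empty] at h
  rw [nextIn, h, ← Finset.coe_min' hJ]; rfl

lemma prevIn_eq_max' {J : Finset (Fin n)} {j : Fin n}
    (h : (J.filter fun k => k < j).Nonempty) :
    prevIn J j = (J.filter fun k => k < j).max' h := by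
  rw [prevIn, ← Finset.coe_max' h]; rfl

lemma prevIn_eq_max {J : Finset (Fin n)} {j : Fin n}
    (h : ¬(J.filter fun k => k < j).Nonempty) (hJ : J.Nonempty) :
    prevIn J j = J.max' hJ := by
  rw [Finset.not_nonempty_iff_eq_empty] at h
  rw [prevIn, h, ← Finset.coe_max' hJ]; rfl

lemma nextIn_mem {J : Finset (Fin n)} (hJ : J.Nonempty) (j : Fin n) :
    nextIn J j ∈ J := by
  by_cases h : (J.filter fun k => j < k).Nonempty
  · rw [nextIn_eq_min' h]
    exact Finset.mem_of_mem_filter _ (Finset.min'_mem _ h)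
  · rw [nextIn_eq_min h hJ]; exact Finset.min'_mem _ hJ

lemma prevIn_mem {J : Finset (Fin n)} (hJ : J.Nonempty) (j : Fin n) :
    prevIn J j ∈ J := by
  by_cases h : (J.filter fun k => k < j).Nonempty
  · rw [prevIn_eq_max' h]
    exact Finset.mem_of_mem_filter _ (Finset.max'_mem _ h)
  · rw [prevIn_eq_max h hJ]; exact Finset.max'_mem _ hJ

lemma prevIn_nextIn {J : Finset (Fin n)} {j : Fin n} (hj : j ∈ J) :
    prevIn J (nextIn J j) = j := by
  have hJ : J.Nonempty := ⟨j, hj⟩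
  by_cases h : (J.filter fun k => j < k).Nonempty
  · rw [nextIn_eq_min' h]
    set k := (J.filter fun k => j < k).min' h with hk
    have hkmem := Finset.min'_mem _ h
    rw [Finset.mem_filter] at hkmem
    have hjk : j < k := hkmem.2
    have h2 : (J.filter fun l => l < k).Nonempty := ⟨j, Finset.mem_filter.2 ⟨hj, hjk⟩⟩
    rw [prevIn_eq_max' h2]
    apply le_antisymm
    · apply Finset.max'_le
      intro l hl
      rw [Finset.mem_filter] at hl
      by_contra hlj
      push_neg at hlj
      have : k ≤ l := Finset.min'_le _ _ (by rw [Finset.mem_filter]; exact ⟨hl.1, hlj⟩)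
      exact absurd hl.2 (not_lt.2 this)
    · exact Finset.le_max' _ _ (by rw [Finset.mem_filter]; exact ⟨hj, hjk⟩)
  · rw [nextIn_eq_min h hJ]
    have hjmax : ∀ l ∈ J, l ≤ j := by
      intro l hl
      by_contra hlj
      exact h ⟨l, Finset.mem_filter.2 ⟨hl, not_le.1 hlj⟩⟩
    have h2 : ¬(J.filter fun l => l < J.min' hJ).Nonempty := by
      rintro ⟨l, hl⟩
      rw [Finset.mem_filter] at hl
      exact absurd (Finset.min'_le _ _ hl.1) (not_le.2 hl.2)
    rw [prevIn_eq_max h2 hJ]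
    exact le_antisymm (hjmax _ (Finset.max'_mem _ hJ)) (Finset.le_max' _ _ hj)

lemma nextIn_prevIn {J : Finset (Fin n)} {j : Fin n} (hj : j ∈ J) :
    nextIn J (prevIn J j) = j := by
  have hJ : J.Nonempty := ⟨j, hj⟩
  by_cases h : (J.filter fun k => k < j).Nonempty
  · rw [prevIn_eq_max' h]
    set k := (J.filter fun k => k < j).max' h with hk
    have hkmem := Finset.max'_mem _ h
    rw [Finset.mem_filter] at hkmem
    have hkj : k < j := hkmem.2
    have h2 : (J.filter fun l => k < l).Nonempty := ⟨j, Finset.mem_filter.2 ⟨hj, hkj⟩⟩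
    rw [nextIn_eq_min' h2]
    apply le_antisymm
    · exact Finset.min'_le _ _ (by rw [Finset.mem_filter]; exact ⟨hj, hkj⟩)
    · apply Finset.le_min'
      intro l hl
      rw [Finset.mem_filter] at hl
      by_contra hlj
      push_neg at hlj
      have : l ≤ k := Finset.le_max' _ _ (by rw [Finset.mem_filter]; exact ⟨hl.1, hlj⟩)
      exact absurd hl.2 (not_lt.2 this)
  · rw [prevIn_eq_max h hJ]
    have hjmin : ∀ l ∈ J, j ≤ l := by
      intro l hl
      by_contra hlj
      exact h ⟨l, Finset.mem_filter.2 ⟨hl, not_le.1 hlj⟩⟩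
    have h2 : ¬(J.filter fun l => J.max' hJ < l).Nonempty := by
      rintro ⟨l, hl⟩
      rw [Finset.mem_filter] at hl
      exact absurd (Finset.le_max' _ _ hl.1) (not_le.2 hl.2)
    rw [nextIn_eq_min h2 hJ]
    exact le_antisymm (Finset.min'_le _ _ hj) (hjmin _ (Finset.min'_mem _ hJ))

/-- The cyclic-rotation permutation on `J`, extended by the identity. -/
noncomputable def rotJ {n : ℕ} (J : Finset (Fin n)) (hJ : J.Nonempty) :
    Equiv.Perm (Fin n) where
  toFun x := if x ∈ J then nextIn J x else x
  invFun x := if x ∈ J then prevIn J x else x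
  left_inv x := by
    by_cases hx : x ∈ J
    · simp only [hx, if_pos, nextIn_mem hJ x, if_pos (nextIn_mem hJ x)]
      exact prevIn_nextIn hx
    · simp [hx]
  right_inv x := by
    by_cases hx : x ∈ J
    · simp only [hx, if_pos, prevIn_mem hJ x, if_pos (prevIn_mem hJ x)]
      exact nextIn_prevIn hx
    · simp [hx]

lemma mem_maxCycleElems {σ : Equiv.Perm (Fin n)} {j : Fin n} :
    j ∈ maxCycleElems σ ↔ ∀ k, σ.SameCycle j k → k ≤ j := by
  simp [maxCycleElems]

lemma maxCycleElems_unique {σ : Equiv.Perm (Fin n)} {j₁ j₂ : Fin n}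
    (h₁ : j₁ ∈ maxCycleElems σ) (h₂ : j₂ ∈ maxCycleElems σ)
    (h : σ.SameCycle j₁ j₂) : j₁ = j₂ :=
  le_antisymm (mem_maxCycleElems.1 h₂ _ h.symm) (mem_maxCycleElems.1 h₁ _ h)

/-- The maximal element of the cycle of `x`. -/
noncomputable def maxOf (σ : Equiv.Perm (Fin n)) (x : Fin n) : Fin n :=
  (Finset.univ.filter (σ.SameCycle x)).max' ⟨x, by simp [Equiv.Perm.SameCycle.refl]⟩

lemma sameCycle_maxOf (σ : Equiv.Perm (Fin n)) (x : Fin n) :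
    σ.SameCycle x (maxOf σ x) := by
  have := Finset.max'_mem (Finset.univ.filter (σ.SameCycle x))
    ⟨x, by simp [Equiv.Perm.SameCycle.refl]⟩
  rw [Finset.mem_filter] at this
  exact this.2

lemma maxOf_mem (σ : Equiv.Perm (Fin n)) (x : Fin n) :
    maxOf σ x ∈ maxCycleElems σ := by
  rw [mem_maxCycleElems]
  intro k hk
  exact Finset.le_max' _ _ (Finset.mem_filter.2 ⟨Finset.mem_univ _,
    ((sameCycle_maxOf σ x).trans hk)⟩)

lemma maxCycleElems_nonempty (σ : Equiv.Perm (Fin n)) (hn : 0 < n) :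
    (maxCycleElems σ).Nonempty :=
  ⟨maxOf σ ⟨0, hn⟩, maxOf_mem σ _⟩

lemma patch_eq_rot (σ : Equiv.Perm (Fin n)) (hJ : (maxCycleElems σ).Nonempty) :
    patch σ = fun x => rotJ (maxCycleElems σ) hJ (σ x) := by
  funext x
  simp only [patch, rotJ, Equiv.coe_fn_mk]

end Helpers

section MainArgs

variable {n : ℕ} (σ : Equiv.Perm (Fin n)) (hJ : (maxCycleElems σ).Nonempty)

local notation "J" => maxCycleElems σ

/-- Powers of the patched permutation agree with powers of `σ` as long as the
maximal element is not revisited. -/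
lemma tau_pow_eq (j : Fin n) (hj : j ∈ maxCycleElems σ) :
    ∀ k : ℕ, (∀ t, 1 ≤ t → t ≤ k → (σ ^ t) j ≠ j) →
      ((rotJ (maxCycleElems σ) hJ * σ) ^ k) j = (σ ^ k) j := by
  intro k
  induction k with
  | zero => intro _; simp
  | succ k ih =>
    intro h
    have hk : ((rotJ (maxCycleElems σ) hJ * σ) ^ k) j = (σ ^ k) j :=
      ih fun t h1 h2 => h t h1 (h2.trans (Nat.le_succ k))
    have hnot : σ ((σ ^ k) j) ∉ maxCycleElems σ := by
      intro hmem
      have hsc : σ.SameCycle j (σ ((σ ^ k) j)) :=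
        Equiv.Perm.sameCycle_apply_right.2 ⟨(k : ℤ), by rw [zpow_natCast]⟩
      have := maxCycleElems_unique hj hmem hsc
      apply h (k + 1) (Nat.succ_le_succ (Nat.zero_le k)) le_rfl
      rw [pow_succ', Equiv.Perm.mul_apply]
      exact this.symm
    rw [pow_succ', Equiv.Perm.mul_apply, hk, Equiv.Perm.mul_apply,
      pow_succ' σ k, Equiv.Perm.mul_apply]
    simp only [rotJ, Equiv.coe_fn_mk, if_neg hnot]

/-- Every point is in the same `τ`-cycle as its `σ`-image. -/
lemma tau_sameCycle_apply (y : Fin n) :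
    (rotJ (maxCycleElems σ) hJ * σ).SameCycle y (σ y) := by
  set τ := rotJ (maxCycleElems σ) hJ * σ with hτ
  by_cases h : σ y ∈ maxCycleElems σ
  · -- σ y is the maximal element j of the cycle of y; go around the cycle
    set j := σ y with hj
    -- find minimal k with (σ ^ k) j = y
    have hex : ∃ k : ℕ, (σ ^ k) j = y := by
      refine ⟨orderOf σ - 1, ?_⟩
      have h1 : (σ ^ orderOf σ) j = j := by rw [pow_orderOf_eq_one]; rfl
      have ho : 1 ≤ orderOf σ := Nat.one_le_iff_ne_zero.2 (orderOf_pos σ).ne'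
      have : σ ((σ ^ (orderOf σ - 1)) j) = j := by
        rw [← Equiv.Perm.mul_apply, ← pow_succ', Nat.sub_add_cancel ho, h1]
      have := congrArg σ.symm this
      simpa [hj] using this
    set k := Nat.find hex with hk
    have hky : (σ ^ k) j = y := Nat.find_spec hex
    have hmin : ∀ t, 1 ≤ t → t ≤ k → (σ ^ t) j ≠ j := by
      intro t h1 h2 heq
      have hlt : k - t < k := Nat.sub_lt (lt_of_lt_of_le h1 h2) h1
      apply Nat.find_min hex hlt
      have : (σ ^ (k - t + t)) j = y := by rwa [Nat.sub_add_cancel h2]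
      rwa [pow_add, Equiv.Perm.mul_apply, heq] at this
    have hpow := tau_pow_eq σ hJ j h k hmin
    rw [hky] at hpow
    have h1 : τ.SameCycle j y := ⟨(k : ℤ), by rw [zpow_natCast]; exact hpow⟩
    exact h1.symm
  · refine ⟨1, ?_⟩
    simp only [zpow_one, hτ, Equiv.Perm.mul_apply]
    simp only [rotJ, Equiv.coe_fn_mk, if_neg h]

end MainArgs

section MainArgs2

variable {n : ℕ} (σ : Equiv.Perm (Fin n)) (hJ : (maxCycleElems σ).Nonempty)

lemma tau_sameCycle_of_sigma {x y : Fin n} (h : σ.SameCycle x y) :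
    (rotJ (maxCycleElems σ) hJ * σ).SameCycle x y := by
  obtain ⟨i, -, rfl⟩ := h.exists_pow_eq'
  clear h
  induction i with
  | zero => simp [Equiv.Perm.SameCycle.refl]
  | succ i ih =>
    have hstep := tau_sameCycle_apply σ hJ ((σ ^ i) x)
    rw [← Equiv.Perm.mul_apply, ← pow_succ'] at hstep
    exact ih.trans hstep

lemma tau_sameCycle_nextIn {j : Fin n} (hj : j ∈ maxCycleElems σ) :
    (rotJ (maxCycleElems σ) hJ * σ).SameCycle j (nextIn (maxCycleElems σ) j) := by
  have h1 : (rotJ (maxCycleElems σ) hJ * σ) (σ⁻¹ j) = nextIn (maxCycleElems σ) j := by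
    simp only [Equiv.Perm.mul_apply, Equiv.Perm.inv_def, Equiv.apply_symm_apply]
    simp only [rotJ, Equiv.coe_fn_mk, if_pos hj]
  have h2 : σ.SameCycle (σ⁻¹ j) j := ⟨1, by simp⟩
  exact (tau_sameCycle_of_sigma σ hJ h2).symm.trans ⟨1, by rw [zpow_one]; exact h1⟩

lemma tau_sameCycle_min (j : Fin n) (hj : j ∈ maxCycleElems σ) :
    (rotJ (maxCycleElems σ) hJ * σ).SameCycle ((maxCycleElems σ).min' hJ) j := by
  have H : ∀ m : ℕ, ∀ j, j ∈ maxCycleElems σ → (j : ℕ) = m →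
      (rotJ (maxCycleElems σ) hJ * σ).SameCycle ((maxCycleElems σ).min' hJ) j := by
    intro m
    induction m using Nat.strong_induction_on with
    | _ m ih =>
      intro j hj hjm
      by_cases hmin : j = (maxCycleElems σ).min' hJ
      · rw [hmin]
      · have hlt : (maxCycleElems σ).min' hJ < j :=
          lt_of_le_of_ne (Finset.min'_le _ _ hj) (Ne.symm hmin)
        have hT : ((maxCycleElems σ).filter fun k => k < j).Nonempty :=
          ⟨_, by rw [Finset.mem_filter]; exact ⟨Finset.min'_mem _ hJ, hlt⟩⟩
        have hj'mem := Finset.max'_mem _ hT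
        rw [Finset.mem_filter] at hj'mem
        have hnext : nextIn (maxCycleElems σ) (((maxCycleElems σ).filter
            fun k => k < j).max' hT) = j := by
          rw [← prevIn_eq_max' hT]; exact nextIn_prevIn hj
        have hih := ih (((maxCycleElems σ).filter fun k => k < j).max' hT : Fin n).val
          (by rw [← hjm]; exact Fin.lt_def.mp hj'mem.2) _ hj'mem.1 rfl
        have hstep := tau_sameCycle_nextIn σ hJ hj'mem.1
        rw [hnext] at hstep
        exact hih.trans hstep
  exact H _ j hj rfl

lemma tau_sameCycle_all (x y : Fin n) :
    (rotJ (maxCycleElems σ) hJ * σ).SameCycle x y := by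
  have h1 := tau_sameCycle_of_sigma σ hJ (sameCycle_maxOf σ x)
  have h2 := tau_sameCycle_of_sigma σ hJ (sameCycle_maxOf σ y)
  have h3 := tau_sameCycle_min σ hJ _ (maxOf_mem σ x)
  have h4 := tau_sameCycle_min σ hJ _ (maxOf_mem σ y)
  exact ((h1.trans h3.symm).trans h4).trans h2.symm

lemma tau_ne (hn : 2 ≤ n) (y : Fin n) : (rotJ (maxCycleElems σ) hJ * σ) y ≠ y := by
  intro hy
  obtain ⟨z, hz⟩ := Fintype.exists_ne_of_one_lt_card
    (by rw [Fintype.card_fin]; omega) y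
  obtain ⟨i, hi⟩ := tau_sameCycle_all σ hJ y z
  have hfix : Function.IsFixedPt (rotJ (maxCycleElems σ) hJ * σ) y := hy
  have := hfix.perm_zpow i
  exact hz (hi ▸ this)

end MainArgs2

lemma card_maxCycleElems {n : ℕ} (σ : Equiv.Perm (Fin n)) :
    (maxCycleElems σ).card = cycleCount σ := by
  classical
  have hsplit := Finset.card_filter_add_card_filter_not
    (s := maxCycleElems σ) (p := fun j => σ j = j)
  have hfix : (maxCycleElems σ).filter (fun j => σ j = j)
      = Finset.univ.filter fun i => σ i = i := by
    ext j
    simp only [Finset.mem_filter, Finset.mem_univ, true_and, mem_maxCycleElems]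
    refine ⟨fun h => h.2, fun h => ⟨fun k hk => ?_, h⟩⟩
    rw [← hk.eq_of_left h]
  have hnonfix : ((maxCycleElems σ).filter fun j => ¬σ j = j).card
      = σ.cycleType.card := by
    rw [Equiv.Perm.cycleType_def, Multiset.card_map]
    show _ = σ.cycleFactorsFinset.card
    apply Finset.card_bij (fun j _ => σ.cycleOf j)
    · intro j hj
      rw [Finset.mem_filter] at hj
      exact Equiv.Perm.cycleOf_mem_cycleFactorsFinset_iff.2
        (Equiv.Perm.mem_support.2 hj.2)
    · intro j₁ hj₁ j₂ hj₂ hcy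
      rw [Finset.mem_filter] at hj₁ hj₂
      have hm : j₂ ∈ (σ.cycleOf j₂).support :=
        Equiv.Perm.mem_support_cycleOf_iff.2
          ⟨Equiv.Perm.SameCycle.refl _ _, Equiv.Perm.mem_support.2 hj₂.2⟩
      rw [← hcy, Equiv.Perm.mem_support_cycleOf_iff] at hm
      exact maxCycleElems_unique hj₁.1 hj₂.1 hm.1
    · intro c hc
      have hc' := Equiv.Perm.mem_cycleFactorsFinset_iff.1 hc
      obtain ⟨x, hx⟩ := hc'.1
      have hxs : x ∈ c.support := Equiv.Perm.mem_support.2 hx.1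
      have hcx : c = σ.cycleOf x := Equiv.Perm.cycle_is_cycleOf hxs hc
      have hσx : σ x ≠ x := by rw [← hc'.2 x hxs]; exact hx.1
      refine ⟨maxOf σ x, ?_, ?_⟩
      · rw [Finset.mem_filter]
        refine ⟨maxOf_mem σ x, fun hfixm => ?_⟩
        have := (sameCycle_maxOf σ x).symm.eq_of_left hfixm
        rw [this] at hfixm
        exact hσx hfixm
      · rw [hcx, (sameCycle_maxOf σ x).cycleOf_eq]
  rw [cycleCount, ← hsplit, hfix, hnonfix]
  omega

theorem patching_map_well_defined_and_few_preimages' (n r : ℕ)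
    (hn : 2 ≤ n) (hr : 1 ≤ r) :
    (∀ σ : Equiv.Perm (Fin n), cycleCount σ = r →
      ∃ τ : Equiv.Perm (Fin n), (⇑τ = patch σ) ∧
        τ.IsCycle ∧ τ.support = Finset.univ) ∧
    (∀ τ : Equiv.Perm (Fin n), τ.IsCycle → τ.support = Finset.univ →
      ((Finset.univ.filter fun σ : Equiv.Perm (Fin n) =>
          cycleCount σ = r ∧ ∀ x, τ x = patch σ x).card ≤ n.choose r)) := by
  have hn0 : 0 < n := by omega
  constructor
  · intro σ hσ
    have hJ := maxCycleElems_nonempty σ hn0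
    refine ⟨rotJ _ hJ * σ, ?_, ?_, ?_⟩
    · rw [patch_eq_rot σ hJ]; rfl
    · exact ⟨⟨0, hn0⟩, tau_ne σ hJ hn _, fun y _ => tau_sameCycle_all σ hJ _ y⟩
    · ext y
      simp only [Equiv.Perm.mem_support, Finset.mem_univ, iff_true]
      exact tau_ne σ hJ hn y
  · intro τ hcyc hsupp
    have hle : (Finset.univ.filter fun σ : Equiv.Perm (Fin n) =>
          cycleCount σ = r ∧ ∀ x, τ x = patch σ x).card
        ≤ ((Finset.univ : Finset (Fin n)).powersetCard r).card := by
      apply Finset.card_le_card_of_injOn (fun σ => maxCycleElems σ)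
      · intro σ hσ
        rw [Finset.mem_coe, Finset.mem_filter] at hσ
        rw [Finset.mem_coe, Finset.mem_powersetCard]
        exact ⟨Finset.subset_univ _, by rw [card_maxCycleElems]; exact hσ.2.1⟩
      · intro σ₁ h₁ σ₂ h₂ hJeq
        rw [Finset.mem_coe, Finset.mem_filter] at h₁ h₂
        have hJ₁ := maxCycleElems_nonempty σ₁ hn0
        have hJ₂ := maxCycleElems_nonempty σ₂ hn0
        apply Equiv.ext
        intro x
        have e1 : rotJ (maxCycleElems σ₁) hJ₁ (σ₁ x)
            = rotJ (maxCycleElems σ₂) hJ₂ (σ₂ x) := by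
          rw [← congrFun (patch_eq_rot σ₁ hJ₁) x, ← congrFun (patch_eq_rot σ₂ hJ₂) x,
            ← h₁.2.2 x, ← h₂.2.2 x]
        have hJ' : maxCycleElems σ₁ = maxCycleElems σ₂ := hJeq
        have e2 : rotJ (maxCycleElems σ₁) hJ₁ = rotJ (maxCycleElems σ₂) hJ₂ := by
          congr 1 <;> first
            | exact hJ'
            | exact proof_irrel_heq _ _
        rw [e2] at e1
        exact (rotJ _ hJ₂).injective e1
    rwa [Finset.card_powersetCard, Finset.card_univ, Fintype.card_fin] at hle

/-- the patching map is well defined from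
`{σ : c(σ) = r}` into the set `Hₙ` of `n`-cycles, and every `τ ∈ Hₙ` has at
most `C(n, r)` preimages. -/
theorem patching_map_well_defined_and_few_preimages (n r : ℕ)
    (hn : 2 ≤ n) (hr : 1 ≤ r) :
    (∀ σ : Equiv.Perm (Fin n), cycleCount σ = r →
      ∃ τ : Equiv.Perm (Fin n), (⇑τ = patch σ) ∧
        τ.IsCycle ∧ τ.support = Finset.univ) ∧
    (∀ τ : Equiv.Perm (Fin n), τ.IsCycle → τ.support = Finset.univ →
      ((Finset.univ.filter fun σ : Equiv.Perm (Fin n) =>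
          cycleCount σ = r ∧ ∀ x, τ x = patch σ x).card ≤ n.choose r)) :=
  patching_map_well_defined_and_few_preimages' n r hn hr
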